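/- Let ε > 0 and let z₁,…,z_k be linearly independent vectors in ℝᵐ with |z_i| ≤ 1 for all i, whose Gram–Schmidt orthogonalization z₁* = z₁, z₂*, …, z_k* satisfies |z_j*| ≥ ε for all j. Let δ ≥ 0 with δ·(1 + 1/ε)^k < 1, and let z₁'',…,z_k'' ∈ ℝᵐ satisfy |z_i''| ≤ δ for all i. Then the perturbed vectors z₁ − z₁'', …, z_k − z_k'' are linearly independent. -/

import Mathlib

set_option maxHeartbeats 1000000


/-- If `z₁,…,z_k` are linearly independent with `|z_i| ≤ 1`, their Gram–Schmidt
orthogonalization satisfies `|z_j*| ≥ ε`, and `δ·(1 + 1/ε)^k < 1`, then any perturbation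
of the `z_i` by vectors of norm at most `δ` remains linearly independent. -/
theorem stmt12 {m k : ℕ} (ε : ℝ) (hε : 0 < ε) (z : Fin k → EuclideanSpace ℝ (Fin m))
    (hli : LinearIndependent ℝ z) (hnorm : ∀ i, ‖z i‖ ≤ 1)
    (hgs : ∀ j : Fin k,
      ε ≤ ‖@InnerProductSpace.gramSchmidt ℝ _ _ _ _ (Fin k) _ _ (inferInstanceAs (WellFoundedLT (Fin k))) z j‖)
    (δ : ℝ) (hδ0 : 0 ≤ δ) (hδ : δ * (1 + 1 / ε) ^ k < 1)
    (z'' : Fin k → EuclideanSpace ℝ (Fin m)) (hz'' : ∀ i, ‖z'' i‖ ≤ δ) :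
    LinearIndependent ℝ (fun i => z i - z'' i) := by
  classical
  set g : Fin k → EuclideanSpace ℝ (Fin m) := @InnerProductSpace.gramSchmidt ℝ _ _ _ _ (Fin k) _ _ (inferInstanceAs (WellFoundedLT (Fin k))) z with hgdef
  have hgε : ∀ j, ε ≤ ‖g j‖ := hgs
  have hgpos : ∀ j, (0:ℝ) < ‖g j‖ := fun j => lt_of_lt_of_le hε (hgε j)
  set r : ℝ := 1 + 1/ε with hrdef
  have hr1 : (1:ℝ) ≤ r := by
    have : 0 < 1/ε := by positivity
    simp [hrdef]; linarith
  have hr0 : (0:ℝ) < r := lt_of_lt_of_le one_pos hr1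
  -- the Gram–Schmidt coefficients
  set μ : Fin k → Fin k → ℝ := fun j i =>
    if i < j then (inner ℝ (g i) (z j) : ℝ) / ‖g i‖ ^ 2 else if i = j then 1 else 0 with hμdef
  have hgeq : ∀ j, z j = g j + ∑ i ∈ Finset.Iio j,
      ((inner ℝ (g i) (z j) : ℝ) / ‖g i‖ ^ 2) • g i := by
    intro j
    have := @InnerProductSpace.gramSchmidt_def'' ℝ _ _ _ _ (Fin k) _ _ (inferInstanceAs (WellFoundedLT (Fin k))) z j
    simpa using this
  have hzg : ∀ j, z j = ∑ i, μ j i • g i := by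
    intro j
    have h1 : ∑ i, μ j i • g i = ∑ i ∈ Finset.Iic j, μ j i • g i := by
      refine (Finset.sum_subset (Finset.subset_univ _) ?_).symm
      intro i _ hi
      have : j < i := by simpa using hi
      have h0 : μ j i = 0 := by
        simp only [hμdef]
        rw [if_neg (by omega), if_neg (by omega)]
      simp [h0]
    have h2 : ∑ i ∈ Finset.Iic j, μ j i • g i
        = μ j j • g j + ∑ i ∈ Finset.Iio j, μ j i • g i := by
      rw [← Finset.Iio_insert, Finset.sum_insert (by simp)]
    have h3 : μ j j = 1 := by simp [hμdef]
    rw [h1, h2, h3, one_smul]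
    rw [hgeq j]
    congr 1
    apply Finset.sum_congr rfl
    intro i hi
    have hij : i < j := by simpa using hi
    simp [hμdef, if_pos hij]
  have hμbound : ∀ j i, j < i → |μ i j| ≤ 1/ε := by
    intro j i hji
    simp only [hμdef, if_pos hji]
    rw [abs_div]
    have hcs : |(inner ℝ (g j) (z i) : ℝ)| ≤ ‖g j‖ * ‖z i‖ := abs_real_inner_le_norm _ _
    have h1 : |(inner ℝ (g j) (z i) : ℝ)| ≤ ‖g j‖ := by
      calc |(inner ℝ (g j) (z i) : ℝ)| ≤ ‖g j‖ * ‖z i‖ := hcs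
        _ ≤ ‖g j‖ * 1 := by
            exact mul_le_mul_of_nonneg_left (hnorm i) (hgpos j).le
        _ = ‖g j‖ := mul_one _
    have h2 : |‖g j‖ ^ 2| = ‖g j‖ * ‖g j‖ := by
      rw [abs_of_nonneg (by positivity)]; ring
    rw [h2, div_le_div_iff₀ (mul_pos (hgpos j) (hgpos j)) hε]
    nlinarith [hgε j, (hgpos j).le, abs_nonneg (inner ℝ (g j) (z i) : ℝ), h1]
  -- reduce to showing coefficient vectors vanish
  rw [Fintype.linearIndependent_iff]
  intro c hc
  by_contra hcn
  push_neg at hcn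
  obtain ⟨i1, hi1⟩ := hcn
  -- the coefficients in the Gram–Schmidt basis
  set d : Fin k → ℝ := fun i => ∑ j, c j * μ j i with hddef
  obtain ⟨i0, -, hi0⟩ := Finset.exists_max_image Finset.univ (fun i => |d i|)
    ⟨i1, Finset.mem_univ _⟩
  set D : ℝ := |d i0| with hDdef
  have hD0 : 0 ≤ D := abs_nonneg _
  have hDa : ∀ i, |d i| ≤ D := fun i => hi0 i (Finset.mem_univ _)
  -- lower bound on the norm of the combination
  have hinner : (inner ℝ (g i0) (∑ j, c j • z j) : ℝ) = d i0 * ‖g i0‖ ^ 2 := by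
    rw [inner_sum]
    have : ∀ j, (inner ℝ (g i0) (c j • z j) : ℝ) = c j * μ j i0 * ‖g i0‖ ^ 2 := by
      intro j
      rw [real_inner_smul_right, hzg j, inner_sum]
      rw [Finset.sum_eq_single i0]
      · rw [real_inner_smul_right, real_inner_self_eq_norm_sq]; ring
      · intro b _ hb
        rw [real_inner_smul_right,
          @InnerProductSpace.gramSchmidt_orthogonal ℝ _ _ _ _ (Fin k) _ _ (inferInstanceAs (WellFoundedLT (Fin k))) z _ _ (Ne.symm hb)]
        ring
      · simp
    rw [Finset.sum_congr rfl fun j _ => this j, ← Finset.sum_mul, hddef]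
  have hlow : ε * D ≤ ‖∑ j, c j • z j‖ := by
    have hcs := abs_real_inner_le_norm (g i0) (∑ j, c j • z j)
    rw [hinner, abs_mul, abs_of_nonneg (by positivity : (0:ℝ) ≤ ‖g i0‖ ^ 2)] at hcs
    have hg0 := hgpos i0
    have hg := hgε i0
    have hcs' : D * (‖g i0‖ * ‖g i0‖) ≤ ‖g i0‖ * ‖∑ j, c j • z j‖ := by
      rw [← sq]; exact hcs
    have h7 : D * ‖g i0‖ ≤ ‖∑ j, c j • z j‖ := by nlinarith [hcs', hg0]
    nlinarith [h7, mul_nonneg (sub_nonneg.mpr hg) hD0]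
  -- pointwise recursion for the coefficients
  have hrec : ∀ j : Fin k, |c j| ≤ D + (1/ε) * ∑ i ∈ Finset.Ioi j, |c i| := by
    intro j
    have hsplit : d j = c j + ∑ i ∈ Finset.Ioi j, c i * μ i j := by
      have h1 : d j = ∑ i ∈ Finset.Ici j, c i * μ i j := by
        refine (Finset.sum_subset (Finset.subset_univ _) ?_).symm
        intro i _ hi
        have hij : i < j := by simpa using hi
        have h0 : μ i j = 0 := by
          simp only [hμdef]
          rw [if_neg (by omega), if_neg (by omega)]
        simp [h0]
      rw [h1, Finset.Ici_eq_cons_Ioi, Finset.sum_cons]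
      have : μ j j = 1 := by simp [hμdef]
      rw [this, mul_one]
    have h2 : |c j| ≤ |d j| + |∑ i ∈ Finset.Ioi j, c i * μ i j| := by
      have : c j = d j - ∑ i ∈ Finset.Ioi j, c i * μ i j := by rw [hsplit]; ring
      rw [this]
      exact (abs_sub _ _)
    have h3 : |∑ i ∈ Finset.Ioi j, c i * μ i j| ≤ (1/ε) * ∑ i ∈ Finset.Ioi j, |c i| := by
      calc |∑ i ∈ Finset.Ioi j, c i * μ i j| ≤ ∑ i ∈ Finset.Ioi j, |c i * μ i j| :=
            Finset.abs_sum_le_sum_abs _ _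
        _ ≤ ∑ i ∈ Finset.Ioi j, |c i| * (1/ε) := by
            refine Finset.sum_le_sum fun i hi => ?_
            rw [abs_mul]
            exact mul_le_mul_of_nonneg_left (hμbound j i (by simpa using hi)) (abs_nonneg _)
        _ = (1/ε) * ∑ i ∈ Finset.Ioi j, |c i| := by rw [← Finset.sum_mul]; ring
    calc |c j| ≤ |d j| + |∑ i ∈ Finset.Ioi j, c i * μ i j| := h2
      _ ≤ D + (1/ε) * ∑ i ∈ Finset.Ioi j, |c i| := add_le_add (hDa j) h3
  -- the arithmetic step
  have arith : ∀ (s : ℝ) (n : ℕ), s ≤ D * ε * (r ^ n - 1) →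
      D + r * s ≤ D * ε * (r ^ (n+1) - 1) := by
    intro s n h
    have h2 : r * s ≤ r * (D * ε * (r ^ n - 1)) := mul_le_mul_of_nonneg_left h hr0.le
    have h3 : r * (D * ε * (r ^ n - 1)) = D * ε * r ^ (n+1) - D * ε * r := by ring
    have h4 : D * ε * r = D * ε + D := by
      rw [hrdef, mul_add, mul_one, mul_assoc D ε, mul_one_div_cancel hε.ne', mul_one]
    rw [h3, h4] at h2
    linarith
  -- bound on sums of tails, by downward induction
  have tail : ∀ n : ℕ, ∀ j : Fin k, k - 1 - (j:ℕ) ≤ n →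
      ∑ i ∈ Finset.Ioi j, |c i| ≤ D * ε * (r ^ (k - 1 - (j:ℕ)) - 1) := by
    intro n
    induction n with
    | zero =>
      intro j hj
      have hjlast : (j:ℕ) = k - 1 := by have := j.isLt; omega
      have hempty : Finset.Ioi j = ∅ := by
        ext i
        simp only [Finset.mem_Ioi, Finset.notMem_empty, iff_false, not_lt]
        have := i.isLt
        rw [Fin.le_def]; omega
      rw [hempty]
      simp only [Finset.sum_empty]
      have : k - 1 - (j:ℕ) = 0 := by omega
      rw [this]
      simp
    | succ n ih =>
      intro j hj
      by_cases hlt : (j:ℕ) + 1 < k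
      · set j' : Fin k := ⟨(j:ℕ)+1, hlt⟩ with hj'def
        have hIoi : Finset.Ioi j = Finset.Ici j' := by
          ext i
          simp only [Finset.mem_Ioi, Finset.mem_Ici, Fin.lt_def, Fin.le_def, hj'def]
          omega
        have hstep : k - 1 - ((j':Fin k):ℕ) = k - 1 - (j:ℕ) - 1 := by
          simp [hj'def]; omega
        have hn' : k - 1 - ((j':Fin k):ℕ) ≤ n := by rw [hstep]; omega
        have hS' := ih j' hn'
        have hc' := hrec j'
        have hSnn : 0 ≤ ∑ i ∈ Finset.Ioi j', |c i| :=
          Finset.sum_nonneg fun i _ => abs_nonneg _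
        rw [hIoi, Finset.Ici_eq_cons_Ioi, Finset.sum_cons]
        have hexp : k - 1 - (j:ℕ) = (k - 1 - (j:ℕ) - 1) + 1 := by omega
        rw [hexp]
        have := arith (∑ i ∈ Finset.Ioi j', |c i|) (k - 1 - (j:ℕ) - 1)
          (by rw [← hstep]; exact hS')
        have hfin : |c j'| + ∑ i ∈ Finset.Ioi j', |c i|
            ≤ D + r * ∑ i ∈ Finset.Ioi j', |c i| := by
          have : D + r * ∑ i ∈ Finset.Ioi j', |c i|
              = (D + (1/ε) * ∑ i ∈ Finset.Ioi j', |c i|) + 1 * ∑ i ∈ Finset.Ioi j', |c i| := by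
            rw [hrdef]; ring
          rw [this, one_mul]
          exact add_le_add hc' le_rfl
        linarith
      · have hjlast : (j:ℕ) = k - 1 := by have := j.isLt; omega
        have hempty : Finset.Ioi j = ∅ := by
          ext i
          simp only [Finset.mem_Ioi, Finset.notMem_empty, iff_false, not_lt]
          have := i.isLt
          rw [Fin.le_def]; omega
        rw [hempty]
        simp only [Finset.sum_empty]
        have : k - 1 - (j:ℕ) = 0 := by omega
        rw [this]
        simp
  -- total coefficient sum bound
  have hk0 : 0 < k := i1.pos
  set j0 : Fin k := ⟨0, hk0⟩ with hj0def
  have huniv : (Finset.univ : Finset (Fin k)) = Finset.Ici j0 := by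
    ext i
    simp only [Finset.mem_univ, Finset.mem_Ici, true_iff]
    rw [Fin.le_def]; exact Nat.zero_le _
  have hC : ∑ i, |c i| ≤ D * ε * (r ^ k - 1) := by
    rw [huniv, Finset.Ici_eq_cons_Ioi, Finset.sum_cons]
    have hS0 := tail (k - 1 - (j0:ℕ)) j0 le_rfl
    have hj00 : ((j0:Fin k):ℕ) = 0 := rfl
    rw [hj00] at hS0
    have hc0 := hrec j0
    have hSnn : 0 ≤ ∑ i ∈ Finset.Ioi j0, |c i| :=
      Finset.sum_nonneg fun i _ => abs_nonneg _
    have hkexp : k = (k - 1 - 0) + 1 := by omega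
    have harr := arith (∑ i ∈ Finset.Ioi j0, |c i|) (k - 1 - 0) hS0
    have hpow : D * ε * (r ^ ((k - 1 - 0) + 1) - 1) = D * ε * (r ^ k - 1) := by
      rw [← hkexp]
    have hfin : |c j0| + ∑ i ∈ Finset.Ioi j0, |c i|
        ≤ D + r * ∑ i ∈ Finset.Ioi j0, |c i| := by
      have : D + r * ∑ i ∈ Finset.Ioi j0, |c i|
          = (D + (1/ε) * ∑ i ∈ Finset.Ioi j0, |c i|) + 1 * ∑ i ∈ Finset.Ioi j0, |c i| := by
        rw [hrdef]; ring
      rw [this, one_mul]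
      exact add_le_add hc0 le_rfl
    linarith [harr, hfin, hpow]
  -- positivity of the total
  have hCpos : 0 < ∑ i, |c i| := by
    refine Finset.sum_pos' (fun i _ => abs_nonneg _) ⟨i1, Finset.mem_univ _, ?_⟩
    exact abs_pos.mpr hi1
  have hDpos : 0 < D := by
    by_contra hD
    push_neg at hD
    have : D = 0 := le_antisymm hD hD0
    rw [this] at hC
    simp at hC
    linarith
  -- the perturbation is small
  have hsum0 : ∑ j, c j • (z j - z'' j) = 0 := hc
  have hsplit2 : ∑ j, c j • z j = ∑ j, c j • z'' j := by
    have : ∑ j, c j • (z j - z'' j) = ∑ j, c j • z j - ∑ j, c j • z'' j := by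
      rw [← Finset.sum_sub_distrib]
      exact Finset.sum_congr rfl fun j _ => smul_sub _ _ _
    rw [this] at hsum0
    exact sub_eq_zero.mp hsum0
  have hup : ‖∑ j, c j • z'' j‖ ≤ δ * ∑ i, |c i| := by
    calc ‖∑ j, c j • z'' j‖ ≤ ∑ j, ‖c j • z'' j‖ := norm_sum_le _ _
      _ = ∑ j, |c j| * ‖z'' j‖ := by
          refine Finset.sum_congr rfl fun j _ => ?_
          rw [norm_smul, Real.norm_eq_abs]
      _ ≤ ∑ j, |c j| * δ :=
          Finset.sum_le_sum fun j _ => mul_le_mul_of_nonneg_left (hz'' j) (abs_nonneg _)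
      _ = (∑ j, |c j|) * δ := by rw [Finset.sum_mul]
      _ = δ * ∑ i, |c i| := mul_comm _ _
  have final : ε * D ≤ δ * (D * ε * (r ^ k - 1)) := by
    calc ε * D ≤ ‖∑ j, c j • z j‖ := hlow
      _ = ‖∑ j, c j • z'' j‖ := by rw [hsplit2]
      _ ≤ δ * ∑ i, |c i| := hup
      _ ≤ δ * (D * ε * (r ^ k - 1)) := mul_le_mul_of_nonneg_left hC hδ0
  nlinarith [final, mul_lt_mul_of_pos_right hδ (mul_pos hDpos hε),
    mul_nonneg (mul_nonneg hδ0 hDpos.le) hε.le]
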